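/- arXiv:2505.09448 — 9 statements merged into one kernel-verified Lean document; each statement's English description precedes it below -/
import Mathlib

section
/- Let R be a commutative ring with identity and M an R-module in which every non-zero submodule contains a minimal submodule. A non-zero proper submodule N of M is an isolated vertex of the graph SSI(M) if and only if N is both a minimal submodule and a maximal submodule of M. -/
open Submodule

/-- A non-zero submodule `S` of `M` is *second* if for every `r : R`,
either `r S = 0` or `r S = S`. -/
def IsSecondSubmodule (R : Type*) {M : Type*} [CommRing R] [AddCommGroup M] [Module R M]
    (S : Submodule R M) : Prop :=
  S ≠ ⊥ ∧ ∀ r : R, S.map (r • (LinearMap.id : M →ₗ[R] M)) = ⊥ ∨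
    S.map (r • (LinearMap.id : M →ₗ[R] M)) = S

/-- A proper submodule `P` of `M` is *prime* if whenever `r • m ∈ P`,
either `m ∈ P` or `r M ⊆ P`. -/
def IsPrimeSubmodule (R : Type*) {M : Type*} [CommRing R] [AddCommGroup M] [Module R M]
    (P : Submodule R M) : Prop :=
  P ≠ ⊤ ∧ ∀ (r : R) (m : M), r • m ∈ P → m ∈ P ∨ ∀ x : M, r • x ∈ P

/-- The second submodule intersection graph `SSI(M)`: vertices are the non-zero proper
submodules of `M`, and two distinct vertices are adjacent iff their intersection is a
second submodule of `M`. -/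
def SSI (R M : Type*) [CommRing R] [AddCommGroup M] [Module R M] :
    SimpleGraph {N : Submodule R M // N ≠ ⊥ ∧ N ≠ ⊤} where
  Adj N K := N ≠ K ∧ IsSecondSubmodule R (N.1 ⊓ K.1)
  symm := ⟨fun N K ⟨h1, h2⟩ => ⟨h1.symm, by rwa [inf_comm]⟩⟩
  loopless := ⟨fun N h => h.1 rfl⟩

/-- The prime submodule sum graph `PSS(M)`: vertices are the non-zero proper
submodules of `M`, and two distinct vertices are adjacent iff their sum is a
prime submodule of `M`. -/
def PSS (R M : Type*) [CommRing R] [AddCommGroup M] [Module R M] :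
    SimpleGraph {N : Submodule R M // N ≠ ⊥ ∧ N ≠ ⊤} where
  Adj N K := N ≠ K ∧ IsPrimeSubmodule R (N.1 ⊔ K.1)
  symm := ⟨fun N K ⟨h1, h2⟩ => ⟨h1.symm, by rwa [sup_comm]⟩⟩
  loopless := ⟨fun N h => h.1 rfl⟩

/-- The prime ideal sum graph `PIS(R)`: vertices are the non-zero proper ideals of `R`,
and two distinct vertices are adjacent iff their sum is a prime ideal of `R`. -/
def PIS (R : Type*) [CommRing R] :
    SimpleGraph {I : Ideal R // I ≠ ⊥ ∧ I ≠ ⊤} where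
  Adj I J := I ≠ J ∧ (I.1 + J.1).IsPrime
  symm := ⟨fun I J ⟨h1, h2⟩ => ⟨h1.symm, by rwa [add_comm]⟩⟩
  loopless := ⟨fun I h => h.1 rfl⟩

/-- Every minimal (atom) submodule is second. -/
lemma atom_isSecond {R M : Type*} [CommRing R] [AddCommGroup M] [Module R M]
    {S : Submodule R M} (h : IsAtom S) : IsSecondSubmodule R S := by
  refine ⟨h.1, fun r => ?_⟩
  have hle : S.map (r • (LinearMap.id : M →ₗ[R] M)) ≤ S := by
    rintro x ⟨y, hy, rfl⟩
    exact S.smul_mem r hy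
  rcases hle.lt_or_eq with h' | h'
  · exact Or.inl (h.2 _ h')
  · exact Or.inr h'

/-- **Theorem 2.5.** A non-zero proper submodule `N` is an isolated vertex of `SSI(M)`
iff `N` is both a minimal and a maximal submodule of `M`. -/
theorem ssi_isolated_vertex_iff
    (R M : Type*) [CommRing R] [AddCommGroup M] [Module R M]
    (hmin : ∀ N : Submodule R M, N ≠ ⊥ → ∃ S : Submodule R M, IsAtom S ∧ S ≤ N)
    (N : {N : Submodule R M // N ≠ ⊥ ∧ N ≠ ⊤}) :
    (∀ w : {N : Submodule R M // N ≠ ⊥ ∧ N ≠ ⊤}, ¬ (SSI R M).Adj N w) ↔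
      (IsAtom N.1 ∧ IsCoatom N.1) := by
  constructor
  · intro hiso
    have hatom : IsAtom N.1 := by
      obtain ⟨S, hS, hSN⟩ := hmin N.1 N.2.1
      by_contra h
      have hSne : S ≠ N.1 := fun e => h (e ▸ hS)
      have hST : S ≠ ⊤ := fun e => N.2.2 (top_le_iff.mp (e ▸ hSN))
      refine hiso ⟨S, hS.1, hST⟩ ⟨?_, ?_⟩
      · intro e; exact hSne (congrArg Subtype.val e).symm
      · rw [show N.1 ⊓ S = S from inf_eq_right.mpr hSN]
        exact atom_isSecond hS
    have hsecN : IsSecondSubmodule R N.1 := atom_isSecond hatom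
    refine ⟨hatom, N.2.2, fun K hK => ?_⟩
    by_contra hKT
    refine hiso ⟨K, ?_, hKT⟩ ⟨?_, ?_⟩
    · exact fun e => N.2.1 (bot_unique (e ▸ hK.le))
    · intro e; exact hK.ne (congrArg Subtype.val e)
    · rw [inf_eq_left.mpr hK.le]; exact hsecN
  · rintro ⟨hatom, hco⟩ w ⟨hne, hsec⟩
    have hle : N.1 ⊓ w.1 ≤ N.1 := inf_le_left
    have heq : N.1 ⊓ w.1 = N.1 := by
      rcases hle.lt_or_eq with h' | h'
      · exact absurd (hatom.2 _ h') hsec.1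
      · exact h'
    have hNle : N.1 ≤ w.1 := heq ▸ inf_le_right
    have : N.1 = w.1 := by
      rcases hNle.lt_or_eq with h' | h'
      · exact absurd (hco.2 _ h') w.2.2
      · exact h'
    exact hne (Subtype.ext this)
end

section
/- Let R be a commutative ring with identity and M a comultiplication R-module. Let N and K be two distinct non-zero proper submodules of M such that Ann_R(N ∩ K) = Ann_R(N) + Ann_R(K) and such that Ann_R(N) and Ann_R(K) are non-zero proper ideals of R. Then N and K are adjacent in SSI(M) (i.e., N ∩ K is a second submodule of M) if and only if Ann_R(N) and Ann_R(K) are adjacent in PIS(R) (i.e., Ann_R(N) + Ann_R(K) is a prime ideal of R). -/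
open Submodule

section Aux

variable {R M : Type*} [CommRing R] [AddCommGroup M] [Module R M]

lemma mem_map_smul_id {r : R} {S : Submodule R M} {x : M} :
    x ∈ S.map (r • (LinearMap.id : M →ₗ[R] M)) ↔ ∃ s ∈ S, r • s = x := by
  simp [Submodule.mem_map]

lemma map_smul_id_eq_bot_iff {r : R} {S : Submodule R M} :
    S.map (r • (LinearMap.id : M →ₗ[R] M)) = ⊥ ↔ r ∈ S.annihilator := by
  rw [Submodule.eq_bot_iff, Submodule.mem_annihilator]
  constructor
  · intro h n hn
    exact h _ (mem_map_smul_id.2 ⟨n, hn, rfl⟩)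
  · intro h x hx
    obtain ⟨s, hs, rfl⟩ := mem_map_smul_id.1 hx
    exact h s hs

lemma mem_ann_map_smul_id {a r : R} {S : Submodule R M} :
    a ∈ (S.map (r • (LinearMap.id : M →ₗ[R] M))).annihilator ↔ a * r ∈ S.annihilator := by
  rw [Submodule.mem_annihilator, Submodule.mem_annihilator]
  constructor
  · intro h n hn
    rw [← smul_smul]
    exact h _ (mem_map_smul_id.2 ⟨n, hn, rfl⟩)
  · intro h x hx
    obtain ⟨s, hs, rfl⟩ := mem_map_smul_id.1 hx
    rw [smul_smul]
    exact h s hs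

lemma eq_torsionBySet_ann
    (hcomul : ∀ N : Submodule R M, ∃ I : Ideal R, N = Submodule.torsionBySet R M (I : Set R))
    (A : Submodule R M) :
    A = Submodule.torsionBySet R M (A.annihilator : Set R) := by
  obtain ⟨I, hI⟩ := hcomul A
  apply le_antisymm
  · intro x hx
    rw [Submodule.mem_torsionBySet_iff]
    rintro ⟨a, ha⟩
    exact Submodule.mem_annihilator.1 ha x hx
  · have hsub : (I : Set R) ⊆ (A.annihilator : Set R) := by
      intro i hi
      rw [SetLike.mem_coe, Submodule.mem_annihilator]
      intro n hn
      rw [hI, Submodule.mem_torsionBySet_iff] at hn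
      exact hn ⟨i, hi⟩
    calc Submodule.torsionBySet R M (A.annihilator : Set R)
        ≤ Submodule.torsionBySet R M (I : Set R) :=
          Submodule.torsionBySet_le_torsionBySet_of_subset hsub
      _ = A := hI.symm

lemma eq_of_ann_eq
    (hcomul : ∀ N : Submodule R M, ∃ I : Ideal R, N = Submodule.torsionBySet R M (I : Set R))
    {A B : Submodule R M} (h : A.annihilator = B.annihilator) : A = B := by
  rw [eq_torsionBySet_ann hcomul A, eq_torsionBySet_ann hcomul B, h]

end Aux

/-- **Proposition 2.7.** For a comultiplication module `M` and distinct non-zero proper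
submodules `N`, `K` with `Ann(N ∩ K) = Ann(N) + Ann(K)` and `Ann(N)`, `Ann(K)` non-zero
proper ideals, `N ∩ K` is second iff `Ann(N) + Ann(K)` is a prime ideal. -/
theorem ssi_adj_iff_pis_adj_of_comultiplication
    (R M : Type*) [CommRing R] [AddCommGroup M] [Module R M]
    (hcomul : ∀ N : Submodule R M, ∃ I : Ideal R, N = Submodule.torsionBySet R M (I : Set R))
    (N K : Submodule R M) (hNK : N ≠ K)
    (hN : N ≠ ⊥) (hN' : N ≠ ⊤) (hK : K ≠ ⊥) (hK' : K ≠ ⊤)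
    (hann : (N ⊓ K).annihilator = N.annihilator + K.annihilator)
    (hAN : N.annihilator ≠ ⊥) (hAN' : N.annihilator ≠ ⊤)
    (hAK : K.annihilator ≠ ⊥) (hAK' : K.annihilator ≠ ⊤) :
    IsSecondSubmodule R (N ⊓ K) ↔ (N.annihilator + K.annihilator).IsPrime := by
  rw [← hann]
  set S := N ⊓ K with hS
  constructor
  · rintro ⟨hbot, hsec⟩
    constructor
    · intro htop
      exact hbot (Submodule.annihilator_eq_top_iff.1 htop)
    · intro a b hab
      by_contra hcon
      push_neg at hcon
      obtain ⟨ha, hb⟩ := hcon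
      rcases hsec a with h | h
      · exact ha (map_smul_id_eq_bot_iff.1 h)
      · apply hb
        rw [Submodule.mem_annihilator]
        intro n hn
        rw [← h] at hn
        obtain ⟨s, hs, rfl⟩ := mem_map_smul_id.1 hn
        rw [smul_smul, mul_comm b a]
        exact Submodule.mem_annihilator.1 hab s hs
  · intro hp
    have hSbot : S ≠ ⊥ := by
      intro h
      exact hp.ne_top (by rw [h, Submodule.annihilator_eq_top_iff])
    refine ⟨hSbot, fun r => ?_⟩
    by_cases hr : r ∈ S.annihilator
    · exact Or.inl (map_smul_id_eq_bot_iff.2 hr)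
    · right
      apply eq_of_ann_eq hcomul
      apply le_antisymm
      · intro a ha
        have : a * r ∈ S.annihilator := mem_ann_map_smul_id.1 ha
        rcases hp.mem_or_mem this with h | h
        · exact h
        · exact absurd h hr
      · intro a ha
        rw [mem_ann_map_smul_id]
        exact Ideal.mul_mem_right r _ ha
end

section
/- Let R be a commutative ring with identity and M an R-module in which every non-zero submodule contains a minimal submodule. If the graph SSI(M) is connected, then the intersection of any two maximal submodules of M is non-zero. -/
open Submodule

private lemma aux_eq_of_le {R M : Type*} [CommRing R] [AddCommGroup M] [Module R M]
    {b N K : Submodule R M} (hb : b ≤ N) (hK : IsCoatom K) (hNK : N ⊓ K = ⊥)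
    (hb0 : b ≠ ⊥) : b = N := by
  have hbK : b ⊔ K = ⊤ := by
    apply hK.2
    refine lt_of_le_of_ne le_sup_right fun h => hb0 ?_
    have hble : b ≤ K := by rw [h]; exact le_sup_left
    have : b ≤ N ⊓ K := le_inf hb hble
    exact le_bot_iff.mp (hNK ▸ this)
  have := sup_inf_assoc_of_le (x := b) K (z := N) hb
  rw [hbK, top_inf_eq, inf_comm K N, hNK, sup_bot_eq] at this
  exact this.symm

/-- **Corollary 2.998.** If `SSI(M)` is connected, then the intersection of any two
maximal submodules of `M` is non-zero. -/
theorem ssi_connected_imp_inf_coatoms_ne_bot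
    (R M : Type*) [CommRing R] [AddCommGroup M] [Module R M]
    (hmin : ∀ N : Submodule R M, N ≠ ⊥ → ∃ S : Submodule R M, IsAtom S ∧ S ≤ N)
    (hconn : (SSI R M).Connected) :
    ∀ K₁ K₂ : Submodule R M, IsCoatom K₁ → IsCoatom K₂ → K₁ ⊓ K₂ ≠ ⊥ := by
  intro K₁ K₂ hK₁ hK₂ h
  have hreach := hconn.preconnected
  obtain ⟨⟨N₀, hN₀b, hN₀t⟩⟩ := hconn.nonempty
  -- any coatom is nonzero, since a nonzero proper submodule exists
  have hne : ∀ K : Submodule R M, IsCoatom K → K ≠ ⊥ := by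
    intro K hK hKb
    subst hKb
    exact hN₀t (hK.2 N₀ (bot_lt_iff_ne_bot.mpr hN₀b))
  have hK₁b : K₁ ≠ ⊥ := hne K₁ hK₁
  have hK₂b : K₂ ≠ ⊥ := hne K₂ hK₂
  have hne12 : K₁ ≠ K₂ := by
    rintro rfl; rw [inf_idem] at h; exact hK₁b h
  -- K₁ and K₂ are atoms
  have hatom₁ : IsAtom K₁ := ⟨hK₁b, fun b hb => by
    by_contra hb0
    exact hb.ne (aux_eq_of_le hb.le hK₂ h hb0)⟩
  have hatom₂ : IsAtom K₂ := ⟨hK₂b, fun b hb => by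
    by_contra hb0
    exact hb.ne (aux_eq_of_le hb.le hK₁ (by rwa [inf_comm]) hb0)⟩
  -- every nonzero proper submodule is an atom
  have hvert : ∀ N : Submodule R M, N ≠ ⊥ → N ≠ ⊤ → IsAtom N := by
    intro N hNb hNt
    by_cases h1 : K₁ ≤ N
    · rcases eq_or_lt_of_le h1 with h1' | h1'
      · exact h1' ▸ hatom₁
      · exact absurd (hK₁.2 N h1') hNt
    · by_cases h2 : K₂ ≤ N
      · rcases eq_or_lt_of_le h2 with h2' | h2'
        · exact h2' ▸ hatom₂
        · exact absurd (hK₂.2 N h2') hNt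
      · -- N ⊓ K₁ = ⊥ since K₁ is an atom not below N
        have hNK₁ : N ⊓ K₁ = ⊥ := by
          rcases (hatom₁.le_iff).mp (inf_le_right : N ⊓ K₁ ≤ K₁) with h' | h'
          · exact h'
          · exact absurd (h' ▸ (inf_le_left : N ⊓ K₁ ≤ N)) h1
        exact ⟨hNb, fun b hb => by
          by_contra hb0
          exact hb.ne (aux_eq_of_le hb.le hK₁ hNK₁ hb0)⟩
  -- the graph has no edges: intersections of distinct atoms are ⊥
  have hnoadj : ∀ v w, ¬ (SSI R M).Adj v w := by
    rintro ⟨N, hNb, hNt⟩ ⟨K, hKb, hKt⟩ ⟨hvw, hsec, -⟩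
    have hN : IsAtom N := hvert N hNb hNt
    have hK : IsAtom K := hvert K hKb hKt
    apply hsec
    rcases (hN.le_iff).mp (inf_le_left : N ⊓ K ≤ N) with h' | h'
    · exact h'
    · have hNK : N ≤ K := h' ▸ (inf_le_right : N ⊓ K ≤ K)
      rcases (hK.le_iff).mp hNK with h'' | h''
      · exact absurd h'' hN.1
      · exact absurd (Subtype.ext h'') hvw
  -- but K₁ and K₂ are distinct vertices, contradicting connectedness
  obtain ⟨w⟩ := hreach ⟨K₁, hK₁b, hK₁.1⟩ ⟨K₂, hK₂b, hK₂.1⟩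
  cases w with
  | nil => exact hne12 (by simpa using congrArg Subtype.val (rfl : (⟨K₁, hK₁b, hK₁.1⟩ : {N : Submodule R M // N ≠ ⊥ ∧ N ≠ ⊤}) = ⟨K₁, hK₁b, hK₁.1⟩))
  | cons hadj _ => exact hnoadj _ _ hadj
end

section
/- Let R be a commutative ring with identity and M an R-module that has two non-comparable non-zero proper submodules N₁ and N₂ (neither contains the other) which are adjacent in SSI(M). Then the girth of SSI(M) equals 3. -/
open Submodule

/-- **Theorem 2.9.** If `M` has two non-comparable submodules adjacent in `SSI(M)`,
then the girth of `SSI(M)` equals `3`. -/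
theorem ssi_girth_eq_three
    (R M : Type*) [CommRing R] [AddCommGroup M] [Module R M]
    (N₁ N₂ : {N : Submodule R M // N ≠ ⊥ ∧ N ≠ ⊤})
    (h₁ : ¬ N₁.1 ≤ N₂.1) (h₂ : ¬ N₂.1 ≤ N₁.1)
    (hadj : (SSI R M).Adj N₁ N₂) :
    (SSI R M).egirth = 3 := by
  obtain ⟨hne, hsec⟩ := hadj
  set S : Submodule R M := N₁.1 ⊓ N₂.1 with hS
  have hSbot : S ≠ ⊥ := hsec.1
  have hS1 : S ≤ N₁.1 := inf_le_left
  have hS2 : S ≤ N₂.1 := inf_le_right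
  have hStop : S ≠ ⊤ := fun h => N₁.2.2 (top_le_iff.mp (le_trans (le_of_eq h.symm) hS1))
  set V : {N : Submodule R M // N ≠ ⊥ ∧ N ≠ ⊤} := ⟨S, hSbot, hStop⟩ with hV
  have hVN₁ : V ≠ N₁ := fun h => h₁ (by
    have hh : V.1 = N₁.1 := congrArg Subtype.val h
    rw [← hh]; exact hS2)
  have hVN₂ : V ≠ N₂ := fun h => h₂ (by
    have hh : V.1 = N₂.1 := congrArg Subtype.val h
    rw [← hh]; exact hS1)
  have adj1 : (SSI R M).Adj N₂ V := by
    refine ⟨fun h => hVN₂ h.symm, ?_⟩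
    have h : N₂.1 ⊓ V.1 = S := by rw [show V.1 = S from rfl, inf_comm, inf_eq_left.mpr hS2]
    rwa [h]
  have adj2 : (SSI R M).Adj V N₁ := by
    refine ⟨hVN₁, ?_⟩
    have h : V.1 ⊓ N₁.1 = S := by rw [show V.1 = S from rfl, inf_eq_left.mpr hS1]
    rwa [h]
  have hadj' : (SSI R M).Adj N₁ N₂ := ⟨hne, hsec⟩
  let w : (SSI R M).Walk N₁ N₁ :=
    SimpleGraph.Walk.cons hadj' (SimpleGraph.Walk.cons adj1 adj2.toWalk)
  have hw : w.IsCycle := by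
    rw [SimpleGraph.Walk.cons_isCycle_iff]
    constructor
    · rw [SimpleGraph.Walk.cons_isPath_iff]
      constructor
      · simp [SimpleGraph.Walk.cons_isPath_iff, fun h => hVN₁ h]
      · simp only [SimpleGraph.Adj.toWalk, SimpleGraph.Walk.support_cons,
          SimpleGraph.Walk.support_nil, List.mem_cons, List.not_mem_nil, or_false]
        rintro (h | h)
        · exact hVN₂ h.symm
        · exact hne h.symm
    · simp only [SimpleGraph.Adj.toWalk, SimpleGraph.Walk.edges_cons,
        SimpleGraph.Walk.edges_nil, List.mem_cons, List.not_mem_nil, or_false]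
      rintro (h | h)
      · rw [Sym2.eq_iff] at h
        rcases h with ⟨ha, _⟩ | ⟨ha, hb⟩
        · exact hne ha
        · exact hVN₁ ha.symm
      · rw [Sym2.eq_iff] at h
        rcases h with ⟨ha, _⟩ | ⟨_, hb⟩
        · exact hVN₁ ha.symm
        · exact hVN₂ hb.symm
  refine le_antisymm ?_ SimpleGraph.three_le_egirth
  have hle : (SSI R M).egirth ≤ w.length := by
    rw [SimpleGraph.egirth]
    refine le_trans (iInf_le _ N₁) (le_trans (iInf_le _ w) (iInf_le _ hw))
  simpa [w] using hle
end

section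
/- Let R be a commutative ring with identity and M an R-module such that the girth of the graph SSI(M) is a finite number n. Then M has at least ⌊n/2⌋ distinct second submodules. -/
open Submodule

open SimpleGraph
lemma myGetVert_eq_getElem {V : Type*} {G : SimpleGraph V} {u v : V} (w : G.Walk u v) :
    ∀ i (h : i < w.support.length), w.getVert i = w.support[i] := by
  induction w with
  | nil => intro i h; simp at h; subst h; rfl
  | cons hadj p ih =>
      intro i h
      cases i with
      | zero => simp [Walk.getVert_zero, Walk.support_cons]
      | succ m =>
          rw [Walk.getVert_cons_succ]
          simp only [Walk.support_cons, List.getElem_cons_succ]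
          exact ih m (by simpa [Walk.support_cons] using h)

lemma myGetVert_tail {V : Type*} {G : SimpleGraph V} {a : V} (w : G.Walk a a)
    {m : ℕ} (hm : 1 ≤ m) (hm2 : m ≤ w.length) :
    w.getVert m = w.support.tail[m-1]'(by simp [w.length_support]; omega) := by
  rw [myGetVert_eq_getElem w m (by simp [w.length_support]; omega)]
  rw [List.getElem_tail]
  congr 1
  omega

lemma myCycle_getVert_ne {V : Type*} {G : SimpleGraph V} {a : V} {w : G.Walk a a}
    (hw : w.IsCycle) {i j : ℕ} (hi : i < w.length) (hj : j < w.length) (hij : i ≠ j) :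
    w.getVert i ≠ w.getVert j := by
  have h3 := hw.three_le_length
  have nodup := hw.support_nodup
  have htl : w.support.tail.length = w.length := by simp [w.length_support]
  -- index map
  have key : ∀ m (hm : m < w.length),
      w.getVert m = w.support.tail[(if m = 0 then w.length else m) - 1]'(by
        rw [htl]; split <;> omega) := by
    intro m hm
    split
    · next h0 =>
        subst h0
        rw [Walk.getVert_zero]
        have := myGetVert_tail w (m := w.length) (by omega) le_rfl
        rw [Walk.getVert_length] at this
        exact this
    · next h0 => exact myGetVert_tail w (by omega) (by omega)
  rw [key i hi, key j hj]
  intro heq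
  have := (nodup.getElem_inj_iff).mp heq
  split at this <;> split at this <;> omega

lemma myEgirth_le_three {V : Type*} {G : SimpleGraph V} {a b c : V}
    (hab : G.Adj a b) (hbc : G.Adj b c) (hca : G.Adj c a) : G.egirth ≤ 3 := by
  have ne1 : a ≠ b := hab.ne
  have ne2 : b ≠ c := hbc.ne
  have ne3 : c ≠ a := hca.ne
  have hw : (Walk.cons hab (Walk.cons hbc (Walk.cons hca Walk.nil))).IsCycle := by
    constructor
    · constructor
      · constructor
        simp [Sym2.eq_iff]
        tauto
      · simp
    · simp
      tauto
  calc G.egirth ≤ ((Walk.cons hab (Walk.cons hbc (Walk.cons hca Walk.nil))).length : ℕ∞) :=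
        iInf_le_of_le a (iInf_le_of_le _ (iInf_le _ hw))
    _ = 3 := by simp

/-- **Theorem 2.11.** If the girth of `SSI(M)` is a finite number `n`, then `M` has at
least `⌊n/2⌋` distinct second submodules. -/
theorem ssi_girth_imp_many_second_submodules
    (R M : Type*) [CommRing R] [AddCommGroup M] [Module R M]
    (n : ℕ) (hg : (SSI R M).egirth = n) :
    (↑(n / 2) : ℕ∞) ≤ {S : Submodule R M | IsSecondSubmodule R S}.encard := by
  classical
  set G := SSI R M with hG
  have hac : ¬ G.IsAcyclic := by
    intro h
    rw [← SimpleGraph.egirth_eq_top] at h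
    rw [h] at hg
    simp at hg
  obtain ⟨a, w, hw, hlen⟩ := SimpleGraph.exists_egirth_eq_length.mpr hac
  rw [hg] at hlen
  have hn : w.length = n := by exact_mod_cast hlen.symm
  have h3 : 3 ≤ n := hn ▸ hw.three_le_length
  set k := n / 2 with hk
  -- the function picking second submodules
  set f : ℕ → Submodule R M := fun i => (w.getVert (2*i)).1 ⊓ (w.getVert (2*i+1)).1 with hf
  have hadj : ∀ i, i < k → G.Adj (w.getVert (2*i)) (w.getVert (2*i+1)) := by
    intro i hik
    exact w.adj_getVert_succ (by omega)
  have hmaps : Set.MapsTo f {i | i < k} {S : Submodule R M | IsSecondSubmodule R S} := by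
    intro i hik
    exact (hadj i hik).2
  have hne : ∀ {i j : ℕ}, i < w.length → j < w.length → i ≠ j →
      (w.getVert i) ≠ (w.getVert j) := fun hi hj hij => myCycle_getVert_ne hw hi hj hij
  have hinj : Set.InjOn f {i | i < k} := by
    intro i hik j hjk hij
    by_contra hne'
    -- the four vertices
    set A := w.getVert (2*i)
    set B := w.getVert (2*i+1)
    set C := w.getVert (2*j)
    set D := w.getVert (2*j+1)
    have hik' : i < k := hik
    have hjk' : j < k := hjk
    have hn4 : 4 ≤ n := by omega
    have hAB : G.Adj A B := hadj i hik'
    have hCD : G.Adj C D := hadj j hjk'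
    have hS : IsSecondSubmodule R (A.1 ⊓ B.1) := hAB.2
    set S : Submodule R M := A.1 ⊓ B.1 with hSdef
    have hSCD : S = C.1 ⊓ D.1 := hij
    have hSA : S ≤ A.1 := inf_le_left
    have hSB : S ≤ B.1 := inf_le_right
    have hSC : S ≤ C.1 := hSCD ▸ inf_le_left
    have hSD : S ≤ D.1 := hSCD ▸ inf_le_right
    -- distinctness
    have hAC : A ≠ C := hne (by omega) (by omega) (by omega)
    have hAD : A ≠ D := hne (by omega) (by omega) (by omega)
    have hBC : B ≠ C := hne (by omega) (by omega) (by omega)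
    have hBD : B ≠ D := hne (by omega) (by omega) (by omega)
    -- no triangles since girth ≥ 4
    have htri : ∀ {x y z : {N : Submodule R M // N ≠ ⊥ ∧ N ≠ ⊤}},
        G.Adj x y → G.Adj y z → G.Adj z x → False := by
      intro x y z h1 h2 h3'
      have := myEgirth_le_three h1 h2 h3'
      rw [hg] at this
      have : (n : ℕ∞) ≤ 3 := this
      have : n ≤ 3 := by exact_mod_cast this
      omega
    -- adjacency from containing S, when one of them has S as underlying submodule
    have adj_of_eq : ∀ {x y : {N : Submodule R M // N ≠ ⊥ ∧ N ≠ ⊤}},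
        S = x.1 → S ≤ y.1 → x ≠ y → G.Adj x y := by
      intro x y hx hy hxy
      refine ⟨hxy, ?_⟩
      have : x.1 ⊓ y.1 = S := by rw [← hx]; exact inf_eq_left.mpr (hx ▸ hy)
      rw [this]; exact hS
    by_cases hA : S = A.1
    · -- triangle A C D
      exact htri (adj_of_eq hA hSC hAC) hCD (adj_of_eq hA hSD hAD).symm
    · by_cases hB : S = B.1
      · exact htri (adj_of_eq hB hSC hBC) hCD (adj_of_eq hB hSD hBD).symm
      · -- S itself is a vertex
        have hSbot : S ≠ ⊥ := hS.1
        have hStop : S ≠ ⊤ := by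
          intro h
          rw [h] at hSA; exact A.2.2 (top_le_iff.mp hSA)
        set s : {N : Submodule R M // N ≠ ⊥ ∧ N ≠ ⊤} := ⟨S, hSbot, hStop⟩ with hs
        have hsA : G.Adj s A := adj_of_eq rfl hSA (fun h => hA (congrArg Subtype.val h))
        have hsB : G.Adj s B := adj_of_eq rfl hSB (fun h => hB (congrArg Subtype.val h))
        exact htri hsA hAB hsB.symm
  calc ((k : ℕ) : ℕ∞) = ({i | i < k} : Set ℕ).encard := (Set.Nat.encard_range k).symm
    _ ≤ _ := Set.encard_le_encard_of_injOn hmaps hinj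
end

section
/- Let R be a commutative ring with identity and M an R-module in which every non-zero submodule contains a minimal submodule, and let 𝓜 be the set of all minimal submodules of M (assumed to consist of proper submodules of M). Then 𝓜 is a minimal dominating set of the graph SSI(M); in particular the domination number of SSI(M) is at most the cardinality of 𝓜. -/
open Submodule

/-- A non-empty set of vertices `D` is a dominating set of `G` if every vertex outside
`D` is adjacent to some vertex of `D`. -/
def IsDominatingSet {V : Type*} (G : SimpleGraph V) (D : Set V) : Prop :=
  D.Nonempty ∧ ∀ v ∉ D, ∃ d ∈ D, G.Adj v d

/-- The domination number of `G`: the minimum cardinality of a dominating set. -/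
noncomputable def dominationNumber {V : Type*} (G : SimpleGraph V) : ℕ∞ :=
  ⨅ D ∈ {D : Set V | IsDominatingSet G D}, D.encard

/-- **Theorem 2.16.** The set of minimal submodules of `M` (assumed proper) is a minimal
dominating set of `SSI(M)`, and the domination number of `SSI(M)` is at most its
cardinality. -/
theorem ssi_minimal_submodules_minimal_dominating
    (R M : Type*) [CommRing R] [AddCommGroup M] [Module R M] [Nontrivial M]
    (hmin : ∀ N : Submodule R M, N ≠ ⊥ → ∃ S : Submodule R M, IsAtom S ∧ S ≤ N)
    (hproper : ∀ S : Submodule R M, IsAtom S → S ≠ ⊤) :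
    IsDominatingSet (SSI R M)
        {v : {N : Submodule R M // N ≠ ⊥ ∧ N ≠ ⊤} | IsAtom v.1} ∧
      (∀ D ⊂ {v : {N : Submodule R M // N ≠ ⊥ ∧ N ≠ ⊤} | IsAtom v.1},
        ¬ IsDominatingSet (SSI R M) D) ∧
      dominationNumber (SSI R M) ≤
        {v : {N : Submodule R M // N ≠ ⊥ ∧ N ≠ ⊤} | IsAtom v.1}.encard := by

  have secondOfAtom : ∀ S : Submodule R M, IsAtom S → IsSecondSubmodule R S := by
    intro S hS
    refine ⟨hS.1, fun r => ?_⟩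
    have hle : S.map (r • (LinearMap.id : M →ₗ[R] M)) ≤ S := by
      rintro x ⟨s, hs, rfl⟩
      simpa using S.smul_mem r hs
    rcases lt_or_eq_of_le hle with h | h
    · exact Or.inl (hS.2 _ h)
    · exact Or.inr h
  have hdom : IsDominatingSet (SSI R M)
      {v : {N : Submodule R M // N ≠ ⊥ ∧ N ≠ ⊤} | IsAtom v.1} := by
    constructor
    · obtain ⟨S, hS, -⟩ := hmin ⊤ (by
        intro h
        exact absurd h.symm (bot_ne_top))
      exact ⟨⟨S, hS.1, hproper S hS⟩, hS⟩
    · intro v hv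
      obtain ⟨S, hS, hSle⟩ := hmin v.1 v.2.1
      have hne : v.1 ≠ S := fun h => hv (by simpa [h] using hS)
      refine ⟨⟨S, hS.1, hproper S hS⟩, hS, ?_⟩
      refine ⟨fun h => hne (congrArg Subtype.val h), ?_⟩
      have heq : v.1 ⊓ S = S := inf_eq_right.mpr hSle
      rw [heq]
      exact secondOfAtom S hS
  refine ⟨hdom, ?_, ?_⟩
  · intro D hDs hD
    obtain ⟨a, ha, haD⟩ := Set.exists_of_ssubset hDs
    obtain ⟨d, hdD, hadj⟩ := hD.2 a haD
    have hd : IsAtom d.1 := hDs.1 hdD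
    have hsec := hadj.2
    rcases lt_or_eq_of_le (inf_le_left : a.1 ⊓ d.1 ≤ a.1) with h | h
    · exact hsec.1 (ha.2 _ h)
    · have hle : a.1 ≤ d.1 := inf_eq_left.mp h
      rcases lt_or_eq_of_le hle with h2 | h2
      · exact a.2.1 (hd.2 _ h2)
      · exact hadj.1 (Subtype.ext h2)
  · exact iInf₂_le _ hdom
end

section
/- Let R be a commutative ring with identity and M an R-module in which every proper submodule is contained in a maximal submodule. A non-zero proper submodule N of M is an isolated vertex of the graph PSS(M) if and only if N is both a maximal submodule and a minimal submodule of M. -/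
open Submodule

lemma coatom_prime {R M : Type*} [CommRing R] [AddCommGroup M] [Module R M]
    {K : Submodule R M} (hK : IsCoatom K) : IsPrimeSubmodule R K := by
  refine ⟨hK.1, fun r m hm => ?_⟩
  by_cases hmK : m ∈ K
  · exact Or.inl hmK
  · right
    have htop : K ⊔ Submodule.span R {m} = ⊤ := by
      apply hK.2
      refine lt_of_le_of_ne le_sup_left fun h => hmK ?_
      rw [h]
      exact Submodule.mem_sup_right (Submodule.mem_span_singleton_self m)
    intro x
    have hx : x ∈ K ⊔ Submodule.span R {m} := htop ▸ Submodule.mem_top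
    obtain ⟨k, hk, y, hy, rfl⟩ := Submodule.mem_sup.mp hx
    obtain ⟨s, rfl⟩ := Submodule.mem_span_singleton.mp hy
    have heq : r • (k + s • m) = r • k + s • (r • m) := by
      rw [smul_add, smul_comm]
    rw [heq]
    exact K.add_mem (K.smul_mem r hk) (K.smul_mem s hm)

/-- **Theorem 3.6.** A non-zero proper submodule `N` is an isolated vertex of `PSS(M)`
iff `N` is both a maximal and a minimal submodule of `M`. -/
theorem pss_isolated_vertex_iff
    (R M : Type*) [CommRing R] [AddCommGroup M] [Module R M]
    (hmax : ∀ N : Submodule R M, N ≠ ⊤ → ∃ K : Submodule R M, IsCoatom K ∧ N ≤ K)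
    (N : {N : Submodule R M // N ≠ ⊥ ∧ N ≠ ⊤}) :
    (∀ w : {N : Submodule R M // N ≠ ⊥ ∧ N ≠ ⊤}, ¬ (PSS R M).Adj N w) ↔
      (IsCoatom N.1 ∧ IsAtom N.1) := by
  constructor
  · intro hiso
    have hNco : IsCoatom N.1 := by
      obtain ⟨K, hK, hNK⟩ := hmax N.1 N.2.2
      have hKeq : K = N.1 := by
        by_contra hne
        have hKbot : K ≠ ⊥ := fun h => N.2.1 (le_bot_iff.mp (h ▸ hNK))
        exact hiso ⟨K, hKbot, hK.1⟩
          ⟨fun h => hne (congrArg Subtype.val h).symm, by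
            rw [sup_eq_right.mpr hNK]; exact coatom_prime hK⟩
      exact hKeq ▸ hK
    refine ⟨hNco, N.2.1, fun L hL => ?_⟩
    by_contra hLbot
    have hLtop : L ≠ ⊤ := fun h => N.2.2 (top_le_iff.mp (h ▸ hL.le))
    exact hiso ⟨L, hLbot, hLtop⟩
      ⟨fun h => hL.ne' (congrArg Subtype.val h), by
        rw [sup_eq_left.mpr hL.le]; exact coatom_prime hNco⟩
  · rintro ⟨hco, hat⟩ w ⟨hne, hprime⟩
    have hsup : N.1 ⊔ w.1 = N.1 := by
      rcases lt_or_eq_of_le (le_sup_left : N.1 ≤ N.1 ⊔ w.1) with h | h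
      · exact absurd (hco.2 _ h) hprime.1
      · exact h.symm
    have hwN : w.1 < N.1 :=
      lt_of_le_of_ne (le_trans le_sup_right hsup.le) fun h => hne (Subtype.ext h.symm)
    exact w.2.1 (hat.2 _ hwN)
end

section
/- Let R be a commutative ring with identity and M an R-module in which every proper submodule is contained in a maximal submodule. If the graph PSS(M) is connected, then the sum of any two minimal submodules of M is a proper submodule of M (i.e., is not equal to M). -/
open Submodule

/-- **Corollary 3.10.** If `PSS(M)` is connected, then the sum of any two minimal
submodules of `M` is a proper submodule of `M`. -/
theorem pss_connected_imp_sup_atoms_ne_top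
    (R M : Type*) [CommRing R] [AddCommGroup M] [Module R M]
    (hmax : ∀ N : Submodule R M, N ≠ ⊤ → ∃ K : Submodule R M, IsCoatom K ∧ N ≤ K)
    (hconn : (PSS R M).Connected) :
    ∀ K₁ K₂ : Submodule R M, IsAtom K₁ → IsAtom K₂ → K₁ ⊔ K₂ ≠ ⊤ := by
  intro K₁ K₂ h1 h2 hsup
  obtain ⟨⟨N0, hN0b, hN0t⟩⟩ := hconn.nonempty
  -- no atom can be ⊤, since there exists a nonzero proper submodule
  have htop : ∀ K : Submodule R M, IsAtom K → K ≠ ⊤ := by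
    intro K hK hKt
    exact hN0b (hK.2 N0 (hKt ▸ hN0t.lt_top))
  have h1t : K₁ ≠ ⊤ := htop K₁ h1
  have h2t : K₂ ≠ ⊤ := htop K₂ h2
  have hne : K₁ ≠ K₂ := by
    rintro rfl
    exact h1t (by simpa using hsup)
  -- the key structural fact: every submodule either sups with K₁ to ⊤ or lies below K₁
  have key : ∀ N : Submodule R M, N ⊔ K₁ = ⊤ ∨ N ≤ K₁ := by
    intro N
    have hle : K₁ ≤ N ⊔ K₁ := le_sup_right
    have hmod : ((N ⊔ K₁) ⊓ K₂) ⊔ K₁ = (N ⊔ K₁) ⊓ (K₂ ⊔ K₁) :=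
      inf_sup_assoc_of_le K₂ hle
    have hsup' : K₂ ⊔ K₁ = ⊤ := by rwa [sup_comm] at hsup
    rw [hsup', inf_top_eq] at hmod
    rcases (h2.le_iff.mp (inf_le_right : (N ⊔ K₁) ⊓ K₂ ≤ K₂)) with hb | he
    · right
      rw [hb, bot_sup_eq] at hmod
      exact le_sup_left.trans hmod.ge
    · left
      have hK2le : K₂ ≤ N ⊔ K₁ := he ▸ inf_le_left
      have : K₁ ⊔ K₂ ≤ N ⊔ K₁ := sup_le hle hK2le
      exact top_le_iff.mp (hsup ▸ this)
  -- vertices corresponding to K₁ and K₂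
  let v₁ : {N : Submodule R M // N ≠ ⊥ ∧ N ≠ ⊤} := ⟨K₁, h1.1, h1t⟩
  let v₂ : {N : Submodule R M // N ≠ ⊥ ∧ N ≠ ⊤} := ⟨K₂, h2.1, h2t⟩
  obtain ⟨w⟩ := hconn v₁ v₂
  have hvne : v₁ ≠ v₂ := fun h => hne (congrArg Subtype.val h)
  obtain ⟨u, hadj, q, -⟩ :=
    SimpleGraph.Walk.not_nil_iff.mp (SimpleGraph.Walk.not_nil_of_ne (p := w) hvne)
  · obtain ⟨hnev, hprime⟩ := hadj
    rcases key u.1 with ht | hl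
    · -- the sum with the neighbor is ⊤, contradicting primality
      exact hprime.1 (by rw [sup_comm] at ht; exact ht)
    · -- the neighbor lies below the atom K₁, hence equals K₁
      rcases h1.le_iff.mp hl with hb | heq
      · exact u.2.1 hb
      · exact hnev (Subtype.ext heq.symm)
end

section
/- Let R be a commutative ring with identity and M an R-module such that the girth of the graph PSS(M) is a finite number n. Then M has at least ⌊n/2⌋ distinct prime submodules. -/
open Submodule

private lemma count_map_or' {α β : Type*} [DecidableEq β] (f g h : α → β) (p : β) :
    ∀ l : List α, (∀ x ∈ l, f x = g x ∨ f x = h x) →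
      (l.map f).count p ≤ (l.map g).count p + (l.map h).count p := by
  intro l
  induction l with
  | nil => simp
  | cons x l ih =>
    intro H
    have hx := H x List.mem_cons_self
    have ht := ih (fun y hy => H y (List.mem_cons_of_mem _ hy))
    simp only [List.map_cons, List.count_cons]
    rcases hx with e | e <;> rw [e] <;> omega

private lemma darts_fst_nodup' {α : Type*} {G : SimpleGraph α} {a : α} {w : G.Walk a a}
    (hw : w.IsCycle) : (w.darts.map (·.fst)).Nodup := by
  rw [SimpleGraph.Walk.map_fst_darts]
  have hs := w.support_eq_cons
  have hn3 : 3 ≤ w.length := hw.three_le_length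
  have hlt : w.support.tail.length = w.length := by
    have h1 := SimpleGraph.Walk.length_support w
    have h2 := congrArg List.length hs
    simp only [List.length_cons] at h2
    omega
  have htne : w.support.tail ≠ [] := by
    intro h; rw [h] at hlt; simp at hlt; omega
  obtain ⟨b, t', hbt⟩ : ∃ b t', w.support.tail = b :: t' :=
    List.exists_cons_of_ne_nil htne
  have hsupp : w.support = a :: b :: t' := by rw [hs, hbt]
  have hga : (b :: t').getLast (by simp) = a := by
    have h0 : w.support.getLast? = some a := by
      rw [List.getLast?_eq_getLast (l := w.support) (by simp), w.getLast_support]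
    rw [hsupp, List.getLast?_cons_cons, List.getLast?_eq_getLast (l := _) (by simp)] at h0
    exact Option.some_injective _ h0
  rw [hs, hbt]
  rw [List.dropLast_cons₂]
  have htnodup : (b :: t').Nodup := hbt ▸ hw.support_nodup
  refine List.Nodup.cons ?_ (htnodup.sublist (List.dropLast_sublist _))
  intro ha
  have hdg := (b :: t').dropLast_append_getLast (by simp)
  rw [hga] at hdg
  have h2 := hdg ▸ htnodup
  rw [List.nodup_append] at h2
  exact h2.2.2 a ha a (by simp) rfl

/-- **Theorem 3.12.** If the girth of `PSS(M)` is a finite number `n`, then `M` has at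
least `⌊n/2⌋` distinct prime submodules. -/
theorem pss_girth_imp_many_prime_submodules
    (R M : Type*) [CommRing R] [AddCommGroup M] [Module R M]
    (n : ℕ) (hg : (PSS R M).egirth = n) :
    (↑(n / 2) : ℕ∞) ≤ {P : Submodule R M | IsPrimeSubmodule R P}.encard := by
  classical
  have hG : ¬ (PSS R M).IsAcyclic := by
    intro h
    rw [← SimpleGraph.egirth_eq_top] at h
    rw [h] at hg
    exact (ENat.coe_ne_top n) hg.symm
  obtain ⟨a, w, hw, hlen⟩ := SimpleGraph.exists_egirth_eq_length.mpr hG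
  have hn : w.length = n := by
    rw [hg] at hlen; exact_mod_cast hlen.symm
  have hn3 : 3 ≤ n := by
    have := SimpleGraph.three_le_egirth (G := PSS R M)
    rw [hg] at this; exact_mod_cast this
  have hdartPrime : ∀ d : (PSS R M).Dart, IsPrimeSubmodule R (d.fst.1 ⊔ d.snd.1) :=
    fun d => And.right d.adj
  by_cases hA : ∀ d ∈ w.darts, d.fst.1 ⊔ d.snd.1 = d.fst.1 ∨ d.fst.1 ⊔ d.snd.1 = d.snd.1
  · -- counting case
    set S := {P : Submodule R M | IsPrimeSubmodule R P} with hS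
    set f : (PSS R M).Dart → Submodule R M := fun d => d.fst.1 ⊔ d.snd.1 with hf
    set L : List (Submodule R M) := w.darts.map f with hL
    have hLlen : L.length = n := by
      simp [hL, SimpleGraph.Walk.length_darts, hn]
    have hLmem : ∀ p ∈ L, IsPrimeSubmodule R p := by
      intro p hp
      rw [hL, List.mem_map] at hp
      obtain ⟨d, _, rfl⟩ := hp
      exact hdartPrime d
    have hnodA : (w.darts.map (fun d => d.fst.1)).Nodup := by
      have := (darts_fst_nodup' hw).map (Subtype.val_injective)
      rwa [List.map_map] at this
    have hnodB : (w.darts.map (fun d => d.snd.1)).Nodup := by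
      have h0 : (w.darts.map (·.snd)).Nodup := by
        rw [SimpleGraph.Walk.map_snd_darts]; exact hw.support_nodup
      have := h0.map (Subtype.val_injective)
      rwa [List.map_map] at this
    have hcount : ∀ p, L.count p ≤ 2 := by
      intro p
      have h1 := count_map_or' f (fun d => d.fst.1) (fun d => d.snd.1) p w.darts hA
      have h2 := List.nodup_iff_count_le_one.mp hnodA p
      have h3 := List.nodup_iff_count_le_one.mp hnodB p
      rw [← hL] at h1
      omega
    have hcard : n ≤ 2 * L.toFinset.card := by
      have h1 : ∑ p ∈ L.toFinset, L.count p = L.length := by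
        have := Multiset.toFinset_sum_count_eq (L : Multiset (Submodule R M))
        simpa using this
      have h2 : ∑ p ∈ L.toFinset, L.count p ≤ ∑ _p ∈ L.toFinset, 2 :=
        Finset.sum_le_sum (fun p _ => hcount p)
      rw [Finset.sum_const, smul_eq_mul] at h2
      omega
    have hdiv : n / 2 ≤ L.toFinset.card := by omega
    calc ((n / 2 : ℕ) : ℕ∞) ≤ (L.toFinset.card : ℕ∞) := by exact_mod_cast hdiv
      _ = (↑L.toFinset : Set (Submodule R M)).encard :=
          (Set.encard_coe_eq_coe_finsetCard _).symm
      _ ≤ S.encard := Set.encard_mono (fun p hp => hLmem p (by simpa using hp))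
  · -- triangle case
    push_neg at hA
    obtain ⟨d, hd, h1, h2⟩ := hA
    have hP : IsPrimeSubmodule R (d.fst.1 ⊔ d.snd.1) := hdartPrime d
    have hPbot : d.fst.1 ⊔ d.snd.1 ≠ ⊥ := by
      intro h
      have hle : d.fst.1 ≤ d.fst.1 ⊔ d.snd.1 := le_sup_left
      rw [h] at hle
      exact d.fst.2.1 (le_bot_iff.mp hle)
    let q : {N : Submodule R M // N ≠ ⊥ ∧ N ≠ ⊤} := ⟨d.fst.1 ⊔ d.snd.1, hPbot, hP.1⟩
    have hqval : q.1 = d.fst.1 ⊔ d.snd.1 := rfl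
    have hfq : d.fst ≠ q := by
      rw [Ne, Subtype.ext_iff, hqval]
      exact fun h => h1 h.symm
    have hsq : d.snd ≠ q := by
      rw [Ne, Subtype.ext_iff, hqval]
      exact fun h => h2 h.symm
    have e1 : (PSS R M).Adj d.fst d.snd := d.adj
    have e2 : (PSS R M).Adj d.snd q := by
      refine And.intro hsq ?_
      have h : d.snd.1 ⊔ q.1 = d.fst.1 ⊔ d.snd.1 := by
        rw [hqval]; exact sup_eq_right.mpr le_sup_right
      rw [h]; exact hP
    have e3 : (PSS R M).Adj q d.fst := by
      refine And.intro hfq.symm ?_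
      have h : q.1 ⊔ d.fst.1 = d.fst.1 ⊔ d.snd.1 := by
        rw [hqval]; exact sup_eq_left.mpr le_sup_left
      rw [h]; exact hP
    let w3 : (PSS R M).Walk d.fst d.fst :=
      SimpleGraph.Walk.cons e1 (SimpleGraph.Walk.cons e2
        (SimpleGraph.Walk.cons e3 SimpleGraph.Walk.nil))
    have hab : d.fst ≠ d.snd := e1.ne
    have hba : d.snd ≠ d.fst := hab.symm
    have hqf : q ≠ d.fst := hfq.symm
    have hqs : q ≠ d.snd := hsq.symm
    have hcyc : w3.IsCycle := by
      rw [SimpleGraph.Walk.isCycle_def]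
      refine ⟨?_, by simp [w3], ?_⟩
      · rw [SimpleGraph.Walk.isTrail_def]
        show List.Nodup [s(d.fst, d.snd), s(d.snd, q), s(q, d.fst)]
        simp only [List.nodup_cons, List.mem_cons, List.mem_singleton,
          List.not_mem_nil, not_false_iff, List.nodup_nil, and_true, Sym2.eq,
          Sym2.rel_iff', Prod.mk.injEq, Prod.swap_prod_mk, not_or]
        tauto
      · show List.Nodup [d.snd, q, d.fst]
        simp only [List.nodup_cons, List.mem_cons, List.mem_singleton,
          List.not_mem_nil, not_false_iff, List.nodup_nil, and_true, not_or]
        tauto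
    have hle : (PSS R M).egirth ≤ 3 := by
      have := SimpleGraph.le_egirth.mp (le_refl (PSS R M).egirth) d.fst w3 hcyc
      simpa [w3] using this
    have hn3' : n ≤ 3 := by
      rw [hg] at hle; exact_mod_cast hle
    have hhalf : n / 2 ≤ 1 := by omega
    have hne : {P : Submodule R M | IsPrimeSubmodule R P}.Nonempty :=
      ⟨d.fst.1 ⊔ d.snd.1, hP⟩
    calc ((n / 2 : ℕ) : ℕ∞) ≤ (1 : ℕ∞) := by exact_mod_cast hhalf
      _ ≤ _ := Set.one_le_encard_iff_nonempty.mpr hne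
end
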